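/- arXiv:1302.1137 — 8 statements merged into one kernel-verified Lean document; each statement's English description precedes it below -/
import Mathlib

section
/- Shift equivalence is an equivalence relation on endomorphisms in any category: it is reflexive and symmetric, and if g : Y → Y is shift equivalent to g' : Y' → Y' and g' is shift equivalent to g'' : Y'' → Y'', then g is shift equivalent to g''. -/
open CategoryTheory

/-- Iterated composition (`m`-th power) of an endomorphism in a category. -/
def catPow {C : Type*} [Category C] {Y : C} (g : Y ⟶ Y) : ℕ → (Y ⟶ Y)
  | 0 => 𝟙 Y
  | m + 1 => catPow g m ≫ g

/-- Endomorphisms `g : Y ⟶ Y` and `g' : Y' ⟶ Y'` in a category are *shift equivalent* if there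
exist morphisms `a : Y ⟶ Y'` and `b : Y' ⟶ Y` and an integer `m ≥ 0` such that `a ∘ g = g' ∘ a`,
`b ∘ g' = g ∘ b`, `b ∘ a = g ^ m` and `a ∘ b = g' ^ m`. -/
def IsShiftEquivalent {C : Type*} [Category C] {Y Y' : C} (g : Y ⟶ Y) (g' : Y' ⟶ Y') : Prop :=
  ∃ (a : Y ⟶ Y') (b : Y' ⟶ Y) (m : ℕ),
    g ≫ a = a ≫ g' ∧ g' ≫ b = b ≫ g ∧ a ≫ b = catPow g m ∧ b ≫ a = catPow g' m

theorem catPow_add {C : Type*} [Category C] {Y : C} (g : Y ⟶ Y) (m n : ℕ) :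
    catPow g m ≫ catPow g n = catPow g (m + n) := by
  induction n with
  | zero => simp [catPow]
  | succ n ih => simp [catPow, ← Category.assoc, ih]

theorem catPow_comm {C : Type*} [Category C] {Y Y' : C} {g : Y ⟶ Y} {g' : Y' ⟶ Y'}
    {a : Y ⟶ Y'} (h : g ≫ a = a ≫ g') (n : ℕ) :
    catPow g n ≫ a = a ≫ catPow g' n := by
  induction n with
  | zero => simp [catPow]
  | succ n ih => rw [catPow, catPow, Category.assoc, h, ← Category.assoc, ih, Category.assoc]

/-- Shift equivalence is an equivalence relation on endomorphisms of a category: it is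
reflexive, symmetric, and transitive. -/
theorem isShiftEquivalent_refl_symm_trans {C : Type*} [Category C] :
    (∀ {Y : C} (g : Y ⟶ Y), IsShiftEquivalent g g) ∧
    (∀ {Y Y' : C} (g : Y ⟶ Y) (g' : Y' ⟶ Y'),
      IsShiftEquivalent g g' → IsShiftEquivalent g' g) ∧
    (∀ {Y Y' Y'' : C} (g : Y ⟶ Y) (g' : Y' ⟶ Y') (g'' : Y'' ⟶ Y''),
      IsShiftEquivalent g g' → IsShiftEquivalent g' g'' → IsShiftEquivalent g g'') := by
  refine ⟨fun g => ⟨𝟙 _, 𝟙 _, 0, by simp [catPow]⟩,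
    fun g g' ⟨a, b, m, h1, h2, h3, h4⟩ => ⟨b, a, m, h2.symm ▸ h2, h1.symm ▸ h1, h4, h3⟩,
    fun g g' g'' ⟨a, b, m, h1, h2, h3, h4⟩ ⟨a', b', n, h1', h2', h3', h4'⟩ =>
      ⟨a ≫ a', b' ≫ b, m + n, ?_, ?_, ?_, ?_⟩⟩
  · rw [← Category.assoc, h1, Category.assoc, h1', Category.assoc]
  · rw [← Category.assoc, h2', Category.assoc, h2, Category.assoc]
  · rw [Category.assoc, ← Category.assoc a' b', h3', catPow_comm h2,
      ← Category.assoc, h3, catPow_add]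
  · rw [Category.assoc, ← Category.assoc b a a', h4, catPow_comm h1', ← Category.assoc, h4',
      catPow_add, Nat.add_comm]
end

section
/- Let g : Y → Y and g' : Y' → Y' be endomorphisms in a category both of which are isomorphisms. Then g and g' are shift equivalent if and only if they are conjugate, i.e., there exists an isomorphism h : Y → Y' such that h∘g = g'∘h. -/
open CategoryTheory

lemma catPow_isIso {C : Type*} [Category C] {Y : C} (g : Y ⟶ Y) [IsIso g] (m : ℕ) :
    IsIso (catPow g m) := by
  induction m with
  | zero => exact inferInstanceAs (IsIso (𝟙 Y))
  | succ n ih => exact inferInstanceAs (IsIso (catPow g n ≫ g))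

/-- Two endomorphisms that are isomorphisms are shift equivalent if and only if they are
conjugate, i.e. there is an isomorphism `h : Y ≅ Y'` with `h ∘ g = g' ∘ h`. -/
theorem isShiftEquivalent_iff_conjugate {C : Type*} [Category C] {Y Y' : C}
    (g : Y ⟶ Y) (g' : Y' ⟶ Y') [IsIso g] [IsIso g'] :
    IsShiftEquivalent g g' ↔ ∃ h : Y ≅ Y', g ≫ h.hom = h.hom ≫ g' := by
  constructor
  · rintro ⟨a, b, m, hag, hgb, hab, hba⟩
    have hg : IsIso (catPow g m) := catPow_isIso g m
    have hg' : IsIso (catPow g' m) := catPow_isIso g' m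
    have hright : a ≫ (b ≫ inv (catPow g m)) = 𝟙 Y := by
      rw [← Category.assoc, hab, IsIso.hom_inv_id]
    have hleft : (inv (catPow g' m) ≫ b) ≫ a = 𝟙 Y' := by
      rw [Category.assoc, hba, IsIso.inv_hom_id]
    have : IsIso a := ⟨b ≫ inv (catPow g m), by
      constructor
      · exact hright
      · have hcomm : catPow g' m ≫ b = b ≫ catPow g m := by
          rw [← hba, ← hab]; exact Category.assoc _ _ _
        have : inv (catPow g' m) ≫ b = b ≫ inv (catPow g m) := by
          rw [IsIso.inv_comp_eq, ← Category.assoc, hcomm, Category.assoc,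
            IsIso.hom_inv_id, Category.comp_id]
        rw [← this]; exact hleft⟩
    exact ⟨asIso a, hag⟩
  · rintro ⟨h, hh⟩
    exact ⟨h.hom, h.inv, 0, hh,
      by
        symm; rw [Iso.inv_comp_eq, ← Category.assoc, ← hh, Category.assoc,
          Iso.hom_inv_id, Category.comp_id],
      by simp [catPow], by simp [catPow]⟩
end

section
/- Two maps φ : J → J and φ' : J' → J' of finite sets J and J' are shift equivalent if and only if their induced permutations are conjugate, i.e., if and only if there exists a bijection h : gim(φ) → gim(φ') such that h(φ(x)) = φ'(h(x)) for every x ∈ gim(φ). -/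
/-- Self-maps `φ : J → J` and `ψ : J' → J'` are *shift equivalent* if there exist maps
`a : J → J'` and `b : J' → J` and an integer `m ≥ 0` such that `a ∘ φ = ψ ∘ a`,
`b ∘ ψ = φ ∘ b`, `b ∘ a = φ^[m]` and `a ∘ b = ψ^[m]`. -/
def FunShiftEquiv {J J' : Type*} (φ : J → J) (ψ : J' → J') : Prop :=
  ∃ (a : J → J') (b : J' → J) (m : ℕ),
    a ∘ φ = ψ ∘ a ∧ b ∘ ψ = φ ∘ b ∧ b ∘ a = φ^[m] ∧ a ∘ b = ψ^[m]

/-- The generalized image `gim(φ) = ⋂ₙ φⁿ(J)`, the largest subset of `J` invariant under `φ`. -/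
def gimSet {J : Type*} (φ : J → J) : Set J :=
  ⋂ n : ℕ, Set.range φ^[n]

theorem mapsTo_gimSet {J : Type*} (φ : J → J) : Set.MapsTo φ (gimSet φ) (gimSet φ) := by
  intro x hx
  simp only [gimSet, Set.mem_iInter] at hx ⊢
  intro n
  obtain ⟨y, hy⟩ := hx n
  exact ⟨φ y, by rw [← Function.iterate_succ_apply, Function.iterate_succ_apply', hy]⟩

/-- The *induced permutation* of `φ`: the restriction of `φ` to `gim(φ)`, regarded as a
self-map of `gim(φ)`. -/
def inducedPerm {J : Type*} (φ : J → J) : gimSet φ → gimSet φ :=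
  Set.MapsTo.restrict φ _ _ (mapsTo_gimSet φ)

/- ### Auxiliary lemmas -/

lemma range_iterate_antitone {J : Type*} (φ : J → J) :
    Antitone fun n => Set.range φ^[n] := by
  apply antitone_nat_of_succ_le
  intro n
  rw [Function.iterate_succ]
  exact Set.range_comp_subset_range _ _

lemma exists_gim_eq_range {J : Type*} [Finite J] (φ : J → J) :
    ∃ N : ℕ, ∀ n, N ≤ n → gimSet φ = Set.range φ^[n] := by
  have hne : (Set.range fun n => (Set.range φ^[n]).ncard).Nonempty := ⟨_, 0, rfl⟩
  obtain ⟨N, hN⟩ := Nat.sInf_mem hne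
  have hN2 : (Set.range φ^[N]).ncard = sInf (Set.range fun n => (Set.range φ^[n]).ncard) := hN
  have hmin : ∀ n, (Set.range φ^[N]).ncard ≤ (Set.range φ^[n]).ncard := by
    intro n
    rw [hN2]
    exact Nat.sInf_le ⟨n, rfl⟩
  have hstab : ∀ n, N ≤ n → Set.range φ^[n] = Set.range φ^[N] := fun n hn =>
    Set.eq_of_subset_of_ncard_le (range_iterate_antitone φ hn) (hmin n) (Set.toFinite _)
  refine ⟨N, fun n hn => ?_⟩
  rw [hstab n hn]
  ext x
  simp only [gimSet, Set.mem_iInter]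
  constructor
  · exact fun h => h N
  · intro hx k
    rcases le_total k N with hk | hk
    · exact range_iterate_antitone φ hk hx
    · rw [hstab k hk]; exact hx

lemma surjOn_gimSet {J : Type*} [Finite J] (φ : J → J) :
    Set.SurjOn φ (gimSet φ) (gimSet φ) := by
  obtain ⟨N, hN⟩ := exists_gim_eq_range φ
  intro x hx
  have h1 : gimSet φ = Set.range φ^[N] := hN N le_rfl
  have h2 : gimSet φ = Set.range φ^[N + 1] := hN (N + 1) (Nat.le_succ N)
  rw [h2] at hx
  obtain ⟨y, hy⟩ := hx
  rw [Function.iterate_succ_apply'] at hy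
  exact ⟨φ^[N] y, by rw [h1]; exact ⟨y, rfl⟩, hy⟩

lemma inducedPerm_coe {J : Type*} (φ : J → J) (x : gimSet φ) :
    (inducedPerm φ x : J) = φ (x : J) := rfl

lemma inducedPerm_iterate_coe {J : Type*} (φ : J → J) (n : ℕ) (x : gimSet φ) :
    ((inducedPerm φ)^[n] x : J) = φ^[n] (x : J) := by
  induction n with
  | zero => rfl
  | succ n ih =>
      rw [Function.iterate_succ_apply', Function.iterate_succ_apply',
        inducedPerm_coe, ih]

lemma inducedPerm_bijective {J : Type*} [Finite J] (φ : J → J) :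
    Function.Bijective (inducedPerm φ) := by
  have hsurj : Function.Surjective (inducedPerm φ) := by
    rintro ⟨y, hy⟩
    obtain ⟨x, hx, hxy⟩ := surjOn_gimSet φ hy
    exact ⟨⟨x, hx⟩, Subtype.ext hxy⟩
  exact ⟨Finite.injective_iff_surjective.2 hsurj, hsurj⟩

/-- Two maps of finite sets are shift equivalent if and only if their induced permutations
are conjugate, i.e. iff there is a bijection `h : gim(φ) → gim(ψ)` with
`h(φ(x)) = ψ(h(x))` for every `x ∈ gim(φ)`. -/
theorem funShiftEquiv_iff_inducedPerm_conjugate {J J' : Type*} [Finite J] [Finite J']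
    (φ : J → J) (ψ : J' → J') :
    FunShiftEquiv φ ψ ↔
      ∃ h : gimSet φ ≃ gimSet ψ,
        ∀ x : gimSet φ, h (inducedPerm φ x) = inducedPerm ψ (h x) := by
  constructor
  · rintro ⟨a, b, m, ha, hb, hba, hab⟩
    -- `a` maps `gim φ` into `gim ψ`, and `b` maps `gim ψ` into `gim φ`.
    have hsc1 : Function.Semiconj a φ ψ := fun x => congrFun ha x
    have hsc2 : Function.Semiconj b ψ φ := fun x => congrFun hb x
    have hsca : ∀ n : ℕ, a ∘ φ^[n] = ψ^[n] ∘ a := fun n => (hsc1.iterate_right n).comp_eq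
    have hscb : ∀ n : ℕ, b ∘ ψ^[n] = φ^[n] ∘ b := fun n => (hsc2.iterate_right n).comp_eq
    have hma : Set.MapsTo a (gimSet φ) (gimSet ψ) := by
      intro x hx
      simp only [gimSet, Set.mem_iInter] at hx ⊢
      intro n
      obtain ⟨y, hy⟩ := hx n
      exact ⟨a y, by rw [← Function.comp_apply (f := ψ^[n]), ← hsca n,
        Function.comp_apply, hy]⟩
    have hmb : Set.MapsTo b (gimSet ψ) (gimSet φ) := by
      intro x hx
      simp only [gimSet, Set.mem_iInter] at hx ⊢
      intro n
      obtain ⟨y, hy⟩ := hx n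
      exact ⟨b y, by rw [← Function.comp_apply (f := φ^[n]), ← hscb n,
        Function.comp_apply, hy]⟩
    set A := hma.restrict a _ _ with hA
    set B := hmb.restrict b _ _ with hB
    have hBA : ∀ x : gimSet φ, B (A x) = (inducedPerm φ)^[m] x := by
      intro x
      apply Subtype.ext
      rw [inducedPerm_iterate_coe]
      have : b (a (x : J)) = φ^[m] (x : J) := congrFun hba (x : J)
      simpa [hA, hB] using this
    have hAB : ∀ y : gimSet ψ, A (B y) = (inducedPerm ψ)^[m] y := by
      intro y
      apply Subtype.ext
      rw [inducedPerm_iterate_coe]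
      have : a (b (y : J')) = ψ^[m] (y : J') := congrFun hab (y : J')
      simpa [hA, hB] using this
    have hAinj : Function.Injective A := by
      intro x y hxy
      have := congrArg B hxy
      rw [hBA, hBA] at this
      exact (((inducedPerm_bijective φ).iterate m).injective) this
    have hAsurj : Function.Surjective A := by
      intro y
      obtain ⟨z, hz⟩ := ((inducedPerm_bijective ψ).iterate m).surjective y
      exact ⟨B z, by rw [hAB, hz]⟩
    refine ⟨Equiv.ofBijective A ⟨hAinj, hAsurj⟩, fun x => ?_⟩
    apply Subtype.ext
    simp only [Equiv.ofBijective_apply, inducedPerm_coe]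
    show a (φ (x : J)) = ψ (a (x : J))
    calc a (φ (x : J)) = (a ∘ φ) (x : J) := rfl
    _ = (ψ ∘ a) (x : J) := by rw [ha]
    _ = ψ (a (x : J)) := rfl
  · rintro ⟨h, hh⟩
    obtain ⟨N, hN⟩ := exists_gim_eq_range φ
    obtain ⟨N', hN'⟩ := exists_gim_eq_range ψ
    have hmemφ : ∀ x : J, φ^[N] x ∈ gimSet φ := by
      intro x; rw [hN N le_rfl]; exact ⟨x, rfl⟩
    have hmemψ : ∀ y : J', ψ^[N'] y ∈ gimSet ψ := by
      intro y; rw [hN' N' le_rfl]; exact ⟨y, rfl⟩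
    -- semiconjugacy for iterates of the induced permutations
    have hhit : ∀ (n : ℕ) (x : gimSet φ),
        h ((inducedPerm φ)^[n] x) = (inducedPerm ψ)^[n] (h x) := by
      intro n
      exact fun x => (Function.Semiconj.iterate_right hh n) x
    have hhsymm : ∀ y : gimSet ψ, h.symm (inducedPerm ψ y) = inducedPerm φ (h.symm y) := by
      intro y
      apply h.injective
      rw [h.apply_symm_apply, hh, h.apply_symm_apply]
    have hhsymmit : ∀ (n : ℕ) (y : gimSet ψ),
        h.symm ((inducedPerm ψ)^[n] y) = (inducedPerm φ)^[n] (h.symm y) := by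
      intro n
      exact fun y => (Function.Semiconj.iterate_right hhsymm n) y
    refine ⟨fun x => (h ⟨φ^[N] x, hmemφ x⟩ : J'),
      fun y => (h.symm ⟨ψ^[N'] y, hmemψ y⟩ : J), N + N', ?_, ?_, ?_, ?_⟩
    · funext x
      simp only [Function.comp_apply]
      have h1 : (⟨φ^[N] (φ x), hmemφ (φ x)⟩ : gimSet φ)
          = inducedPerm φ ⟨φ^[N] x, hmemφ x⟩ := by
        apply Subtype.ext
        rw [inducedPerm_coe]
        exact (Function.iterate_succ_apply φ N x).symm.trans
          (Function.iterate_succ_apply' φ N x)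
      rw [h1, hh, inducedPerm_coe]
    · funext y
      simp only [Function.comp_apply]
      have h1 : (⟨ψ^[N'] (ψ y), hmemψ (ψ y)⟩ : gimSet ψ)
          = inducedPerm ψ ⟨ψ^[N'] y, hmemψ y⟩ := by
        apply Subtype.ext
        rw [inducedPerm_coe]
        exact (Function.iterate_succ_apply ψ N' y).symm.trans
          (Function.iterate_succ_apply' ψ N' y)
      rw [h1, hhsymm, inducedPerm_coe]
    · funext x
      simp only [Function.comp_apply]
      have h1 : (⟨ψ^[N'] ((h ⟨φ^[N] x, hmemφ x⟩ : gimSet ψ) : J'), hmemψ _⟩ : gimSet ψ)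
          = (inducedPerm ψ)^[N'] (h ⟨φ^[N] x, hmemφ x⟩) := by
        apply Subtype.ext
        rw [inducedPerm_iterate_coe]
      rw [h1, ← hhit, h.symm_apply_apply, inducedPerm_iterate_coe]
      show φ^[N'] (φ^[N] x) = φ^[N + N'] x
      rw [← Function.iterate_add_apply, Nat.add_comm]
    · funext y
      simp only [Function.comp_apply]
      have h1 : (⟨φ^[N] ((h.symm ⟨ψ^[N'] y, hmemψ y⟩ : gimSet φ) : J), hmemφ _⟩ : gimSet φ)
          = (inducedPerm φ)^[N] (h.symm ⟨ψ^[N'] y, hmemψ y⟩) := by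
        apply Subtype.ext
        rw [inducedPerm_iterate_coe]
      rw [h1, ← hhsymmit, h.apply_symm_apply, inducedPerm_iterate_coe]
      show ψ^[N] (ψ^[N'] y) = ψ^[N + N'] y
      rw [← Function.iterate_add_apply]
end

section
/- If u : G → G and v : H → H are shift equivalent linear endomorphisms of finite-dimensional ℚ-vector spaces, then trace(u^n) = trace(v^n) for every integer n ≥ 1 (i.e., u and v are spectrum equivalent). -/
lemma aux_trace_isCompl {M : Type*} [AddCommGroup M] [Module ℚ M] [FiniteDimensional ℚ M]
    {p q : Submodule ℚ M} (h : IsCompl p q) (f : M →ₗ[ℚ] M)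
    (hp : ∀ x ∈ p, f x ∈ p) (hq : ∀ x ∈ q, f x ∈ q) :
    LinearMap.trace ℚ M f
      = LinearMap.trace ℚ p (f.restrict hp) + LinearMap.trace ℚ q (f.restrict hq) := by
  classical
  set N : Bool → Submodule ℚ M := fun b => cond b p q with hN
  have hint : DirectSum.IsInternal N := by
    rw [DirectSum.isInternal_submodule_iff_isCompl N (i := true) (j := false) (by simp)
      (by ext x; simp)]
    exact h
  have hf : ∀ b, Set.MapsTo f (N b) (N b) := by
    intro b; cases b
    · exact hq
    · exact hp
  have := LinearMap.trace_eq_sum_trace_restrict hint hf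
  rw [this, Fintype.sum_bool]; rfl

/-- Fitting: there is a `u`-invariant submodule on which `u` is bijective and which carries
all the trace of every positive power of `u`. -/
lemma aux_fitting {M : Type*} [AddCommGroup M] [Module ℚ M] [FiniteDimensional ℚ M]
    (u : M →ₗ[ℚ] M) :
    ∃ (R : Submodule ℚ M) (hR : ∀ x ∈ R, u x ∈ R),
      Function.Bijective (u.restrict hR) ∧
      ∀ n, 1 ≤ n →
        LinearMap.trace ℚ M (u ^ n) = LinearMap.trace ℚ R ((u.restrict hR) ^ n) := by
  obtain ⟨N, hN⟩ := Filter.eventually_atTop.mp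
    (u.eventually_isCompl_ker_pow_range_pow.and u.eventually_iInf_range_pow_eq)
  have hcompl : IsCompl (LinearMap.ker (u ^ N)) (LinearMap.range (u ^ N)) := (hN N le_rfl).1
  have hstab : LinearMap.range (u ^ (N + 1)) = LinearMap.range (u ^ N) := by
    rw [← (hN (N + 1) (Nat.le_succ N)).2, (hN N le_rfl).2]
  have hR : ∀ x ∈ LinearMap.range (u ^ N), u x ∈ LinearMap.range (u ^ N) := by
    rintro x ⟨y, rfl⟩
    rw [← hstab]
    exact ⟨y, by rw [pow_succ']; rfl⟩
  have hsurj : Function.Surjective (u.restrict hR) := by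
    rintro ⟨y, hy⟩
    rw [← hstab] at hy
    obtain ⟨z, rfl⟩ := hy
    refine ⟨⟨(u ^ N) z, ⟨z, rfl⟩⟩, ?_⟩
    apply Subtype.ext
    rw [LinearMap.restrict_apply]
    show u ((u ^ N) z) = (u ^ (N + 1)) z
    rw [pow_succ']
    rfl
  refine ⟨LinearMap.range (u ^ N), hR, ⟨LinearMap.injective_iff_surjective.mpr hsurj, hsurj⟩, ?_⟩
  intro n hn
  have hker : ∀ x ∈ LinearMap.ker (u ^ N), (u ^ n) x ∈ LinearMap.ker (u ^ N) := by
    intro x hx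
    simp only [LinearMap.mem_ker] at hx ⊢
    rw [← LinearMap.comp_apply, ← Module.End.mul_eq_comp, ← pow_add, add_comm, pow_add,
      Module.End.mul_eq_comp, LinearMap.comp_apply, hx, map_zero]
  have hrng : ∀ x ∈ LinearMap.range (u ^ N), (u ^ n) x ∈ LinearMap.range (u ^ N) :=
    fun x hx => Module.End.pow_apply_mem_of_forall_mem n hR x hx
  rw [aux_trace_isCompl hcompl (u ^ n) hker hrng]
  have hnil : IsNilpotent ((u ^ n).restrict hker) := by
    refine ⟨N, ?_⟩
    rw [Module.End.pow_restrict]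
    ext x
    have hx := x.2
    simp only [LinearMap.mem_ker] at hx
    rw [LinearMap.restrict_apply]
    simp only [LinearMap.zero_apply, ZeroMemClass.coe_zero]
    have h1 : (u ^ n) ^ N = u ^ (n * N) := (pow_mul u n N).symm
    obtain ⟨k, hk⟩ : ∃ k, n * N = k + N := ⟨n * N - N, by
      have := Nat.le_mul_of_pos_left N (show 0 < n by omega); omega⟩
    rw [h1, hk, pow_add, Module.End.mul_eq_comp, LinearMap.comp_apply, hx, map_zero]
  have h0 : LinearMap.trace ℚ _ ((u ^ n).restrict hker) = 0 :=
    (LinearMap.isNilpotent_trace_of_isNilpotent hnil).eq_zero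
  rw [h0, zero_add, Module.End.pow_restrict]

open Finset in
lemma aux_seq (D : ℕ) (c : ℕ → ℚ) (hc0 : c 0 ≠ 0) (s t : ℕ → ℚ)
    (hs : ∀ k, ∑ i ∈ Finset.range (D+1), c i * s (i+k) = 0)
    (ht : ∀ k, ∑ i ∈ Finset.range (D+1), c i * t (i+k) = 0)
    (M : ℕ) (hst : ∀ k, M ≤ k → s k = t k) : ∀ k, s k = t k := by
  suffices h : ∀ j k, M ≤ k + j → s k = t k by
    intro k; exact h M k (Nat.le_add_left M k)
  intro j
  induction j with
  | zero => intro k hk; exact hst k (by simpa using hk)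
  | succ j ih =>
    intro k hk
    by_cases h' : M ≤ k + j
    · exact ih k h'
    have h1 := hs k; have h2 := ht k
    rw [Finset.sum_range_succ'] at h1 h2
    have he : ∑ i ∈ Finset.range D, c (i+1) * s (i+1+k)
        = ∑ i ∈ Finset.range D, c (i+1) * t (i+1+k) :=
      Finset.sum_congr rfl (fun i hi => by rw [ih (i+1+k) (by omega)])
    have : c 0 * s (0 + k) = c 0 * t (0 + k) := by linarith [h1, h2, he]
    have := mul_left_cancel₀ hc0 this
    simpa using this

lemma aux_rec {W : Type*} [AddCommGroup W] [Module ℚ W] [FiniteDimensional ℚ W]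
    (f : W →ₗ[ℚ] W) (P : Polynomial ℚ) (hf : Polynomial.aeval f P = 0) (k : ℕ) :
    ∑ i ∈ Finset.range (P.natDegree + 1), P.coeff i * LinearMap.trace ℚ W (f ^ (i + k)) = 0 := by
  have h0 : (Polynomial.aeval f P) * f ^ k = 0 := by rw [hf, zero_mul]
  rw [Polynomial.aeval_eq_sum_range, Finset.sum_mul] at h0
  have h1 : ∀ i ∈ Finset.range (P.natDegree + 1),
      (P.coeff i • f ^ i) * f ^ k = P.coeff i • f ^ (i + k) := by
    intro i _
    rw [smul_mul_assoc, ← pow_add]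
  rw [Finset.sum_congr rfl h1] at h0
  have h2 := congrArg (LinearMap.trace ℚ W) h0
  rw [map_sum, map_zero] at h2
  simpa [smul_eq_mul] using h2

lemma aux_semiconj {G H : Type*} [AddCommGroup G] [Module ℚ G] [AddCommGroup H] [Module ℚ H]
    {u : G →ₗ[ℚ] G} {v : H →ₗ[ℚ] H} {a : G →ₗ[ℚ] H} (ha : a ∘ₗ u = v ∘ₗ a) (n : ℕ) :
    a ∘ₗ (u ^ n) = (v ^ n) ∘ₗ a := by
  induction n with
  | zero => ext x; simp
  | succ n ih =>
    rw [pow_succ, pow_succ, Module.End.mul_eq_comp, Module.End.mul_eq_comp,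
      ← LinearMap.comp_assoc, ih, LinearMap.comp_assoc, ha, ← LinearMap.comp_assoc]



/-- Linear endomorphisms `u : G → G` and `v : H → H` of `ℚ`-vector spaces are *shift
equivalent* if there exist linear maps `a : G → H` and `b : H → G` and an integer `m ≥ 0`
such that `a ∘ u = v ∘ a`, `b ∘ v = u ∘ b`, `b ∘ a = u ^ m` and `a ∘ b = v ^ m`. -/
def LinShiftEquiv {G H : Type*} [AddCommGroup G] [Module ℚ G] [AddCommGroup H] [Module ℚ H]
    (u : G →ₗ[ℚ] G) (v : H →ₗ[ℚ] H) : Prop :=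
  ∃ (a : G →ₗ[ℚ] H) (b : H →ₗ[ℚ] G) (m : ℕ),
    a ∘ₗ u = v ∘ₗ a ∧ b ∘ₗ v = u ∘ₗ b ∧ b ∘ₗ a = u ^ m ∧ a ∘ₗ b = v ^ m

/-- Shift equivalent linear endomorphisms of finite-dimensional `ℚ`-vector spaces have
equal traces of all their iterates (they are spectrum equivalent). -/
theorem trace_pow_eq_of_linShiftEquiv {G H : Type*}
    [AddCommGroup G] [Module ℚ G] [FiniteDimensional ℚ G]
    [AddCommGroup H] [Module ℚ H] [FiniteDimensional ℚ H]
    (u : G →ₗ[ℚ] G) (v : H →ₗ[ℚ] H) (h : LinShiftEquiv u v) :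
    ∀ n : ℕ, 1 ≤ n → LinearMap.trace ℚ G (u ^ n) = LinearMap.trace ℚ H (v ^ n) := by
  obtain ⟨a, b, m, ha, hb, hba, hab⟩ := h
  -- traces agree from exponent m on
  have htr : ∀ n : ℕ, LinearMap.trace ℚ G (u ^ (n + m)) = LinearMap.trace ℚ H (v ^ (n + m)) := by
    intro n
    have e1 : u ^ (n + m) = ((u ^ n) ∘ₗ b) ∘ₗ a := by
      rw [LinearMap.comp_assoc, hba, pow_add, Module.End.mul_eq_comp]
    have e2 : v ^ (n + m) = a ∘ₗ ((u ^ n) ∘ₗ b) := by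
      rw [← LinearMap.comp_assoc, aux_semiconj ha n, LinearMap.comp_assoc, hab,
        pow_add, Module.End.mul_eq_comp]
    rw [e1, e2, LinearMap.trace_comp_comm']
  -- Fitting decompositions
  obtain ⟨R, hR, hRbij, hRtr⟩ := aux_fitting u
  obtain ⟨S, hS, hSbij, hStr⟩ := aux_fitting v
  set U := u.restrict hR with hU
  set V := v.restrict hS with hV
  set P : Polynomial ℚ := U.charpoly * V.charpoly with hP
  have hcoeff : P.coeff 0 ≠ 0 := by
    rw [Polynomial.mul_coeff_zero]
    have h1 : U.charpoly.coeff 0 ≠ 0 := by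
      intro h0
      have := LinearMap.det_eq_sign_charpoly_coeff U
      rw [h0, mul_zero] at this
      exact (LinearMap.isUnit_det U ((Module.End.isUnit_iff U).mpr hRbij)).ne_zero this
    have h2 : V.charpoly.coeff 0 ≠ 0 := by
      intro h0
      have := LinearMap.det_eq_sign_charpoly_coeff V
      rw [h0, mul_zero] at this
      exact (LinearMap.isUnit_det V ((Module.End.isUnit_iff V).mpr hSbij)).ne_zero this
    exact mul_ne_zero h1 h2
  have haevalU : Polynomial.aeval U P = 0 := by
    rw [hP, map_mul, LinearMap.aeval_self_charpoly, zero_mul]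
  have haevalV : Polynomial.aeval V P = 0 := by
    rw [hP, map_mul, LinearMap.aeval_self_charpoly, mul_zero]
  set s : ℕ → ℚ := fun k => LinearMap.trace ℚ R (U ^ k) with hs_def
  set t : ℕ → ℚ := fun k => LinearMap.trace ℚ S (V ^ k) with ht_def
  have hagree : ∀ k, m + 1 ≤ k → s k = t k := by
    intro k hk
    have h1 : s k = LinearMap.trace ℚ G (u ^ k) := (hRtr k (by omega)).symm
    have h2 : t k = LinearMap.trace ℚ H (v ^ k) := (hStr k (by omega)).symm
    have h3 : LinearMap.trace ℚ G (u ^ k) = LinearMap.trace ℚ H (v ^ k) := by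
      have := htr (k - m)
      rwa [Nat.sub_add_cancel (by omega)] at this
    rw [h1, h2, h3]
  have hst : ∀ k, s k = t k :=
    aux_seq P.natDegree (fun i => P.coeff i) hcoeff s t
      (fun k => aux_rec U P haevalU k) (fun k => aux_rec V P haevalV k) (m + 1) hagree
  intro n hn
  rw [hRtr n hn, hStr n hn]
  exact hst n
end

section
/- For every map φ : J → J of a finite set J, the sequence {#Fix(φ^n)}_{n≥1} satisfies Dold's congruences: for every integer n ≥ 1, the sum ∑_{k|n} μ(n/k)·#Fix(φ^k), taken over the positive divisors k of n, is divisible by n, where μ is the Möbius function. -/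
open Function

section

variable {J : Type*} (φ : J → J) (n : ℕ) [NeZero n]

private lemma dold_minimalPeriod_iterate {x : J} (hx : Function.minimalPeriod φ x = n)
    (k : ℕ) : Function.minimalPeriod φ (φ^[k] x) = n := by
  induction k with
  | zero => simpa using hx
  | succ k ih =>
    rw [Function.iterate_succ_apply', Function.minimalPeriod_apply, ih]
    rw [← Function.minimalPeriod_pos_iff_mem_periodicPts, ih]
    exact Nat.pos_of_ne_zero (NeZero.ne n)

private instance doldAddAction :
    AddAction (ZMod n) {x : J // Function.minimalPeriod φ x = n} where
  vadd j x := ⟨φ^[j.val] x.1, dold_minimalPeriod_iterate φ n x.2 _⟩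
  zero_vadd x := by
    apply Subtype.ext
    show φ^[(0 : ZMod n).val] x.1 = x.1
    simp [ZMod.val_zero]
  add_vadd a b x := by
    apply Subtype.ext
    show φ^[(a + b).val] x.1 = φ^[a.val] (φ^[b.val] x.1)
    have hper : Function.IsPeriodicPt φ n x.1 := by
      conv_lhs => rw [← x.2]
      exact Function.isPeriodicPt_minimalPeriod φ x.1
    rw [← Function.iterate_add_apply, ZMod.val_add, hper.iterate_mod_apply]

private lemma dold_vadd_def (j : ZMod n) (x : {x : J // Function.minimalPeriod φ x = n}) :
    (j +ᵥ x).1 = φ^[j.val] x.1 := rfl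

private lemma dold_dvd_card [Finite J] :
    n ∣ Nat.card {x : J // Function.minimalPeriod φ x = n} := by
  classical
  set S := {x : J // Function.minimalPeriod φ x = n} with hS
  haveI : Fintype S := Fintype.ofFinite S
  -- stabilizers are trivial
  have hstab : ∀ x : S, AddAction.stabilizer (ZMod n) x = ⊥ := by
    intro x
    ext j
    simp only [AddAction.mem_stabilizer_iff, AddSubgroup.mem_bot]
    constructor
    · intro hj
      have hj' : φ^[j.val] x.1 = x.1 := (dold_vadd_def φ n j x) ▸ congrArg Subtype.val hj
      have : Function.minimalPeriod φ x.1 ∣ j.val :=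
        Function.IsPeriodicPt.minimalPeriod_dvd hj'
      rw [x.2] at this
      have hv : j.val = 0 := Nat.eq_zero_of_dvd_of_lt this (ZMod.val_lt j)
      exact (ZMod.val_eq_zero j).mp hv
    · rintro rfl; exact zero_vadd _ x
  -- each orbit has cardinality n
  have horb : ∀ x : S, Nat.card (AddAction.orbit (ZMod n) x) = n := by
    intro x
    rw [Nat.card_congr (AddAction.orbitEquivQuotientStabilizer (ZMod n) x), hstab x,
      Nat.card_congr QuotientAddGroup.quotientBot.toEquiv, Nat.card_zmod]
  haveI : Fintype (AddAction.orbitRel.Quotient (ZMod n) S) := Fintype.ofFinite _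
  rw [Nat.card_congr (AddAction.selfEquivSigmaOrbits' (ZMod n) S)]
  rw [Nat.card_eq_fintype_card, Fintype.card_sigma]
  apply Finset.dvd_sum
  intro ω _
  rw [← Nat.card_eq_fintype_card]
  induction ω using Quotient.inductionOn' with
  | h x =>
    rw [show (AddAction.orbitRel.Quotient.orbit (Quotient.mk'' x)) =
      AddAction.orbit (ZMod n) x from AddAction.orbitRel.Quotient.orbit_mk x, horb x]

end

section
open Function
variable {J : Type*} [Finite J] (φ : J → J)

private lemma dold_card_fix {k : ℕ} (hk : k ≠ 0) :
    Nat.card {x : J // φ^[k] x = x} =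
      ∑ d ∈ k.divisors, Nat.card {x : J // Function.minimalPeriod φ x = d} := by
  classical
  haveI : Fintype J := Fintype.ofFinite J
  have key : (Finset.univ.filter fun x : J => φ^[k] x = x) =
      k.divisors.biUnion
        (fun d => Finset.univ.filter fun x : J => Function.minimalPeriod φ x = d) := by
    ext x
    simp only [Finset.mem_filter, Finset.mem_univ, true_and, Finset.mem_biUnion,
      Nat.mem_divisors]
    constructor
    · intro h
      exact ⟨Function.minimalPeriod φ x,
        ⟨Function.IsPeriodicPt.minimalPeriod_dvd h, hk⟩, rfl⟩
    · rintro ⟨d, ⟨hd, -⟩, rfl⟩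
      exact Function.isPeriodicPt_iff_minimalPeriod_dvd.mpr hd
  have hdisj : ∀ d ∈ k.divisors, ∀ e ∈ k.divisors, d ≠ e →
      Disjoint (Finset.univ.filter fun x : J => Function.minimalPeriod φ x = d)
        (Finset.univ.filter fun x : J => Function.minimalPeriod φ x = e) := by
    intro d _ e _ hde
    simp only [Finset.disjoint_left, Finset.mem_filter, Finset.mem_univ, true_and]
    rintro x rfl h
    exact hde h
  simp only [Nat.card_eq_fintype_card, Fintype.card_subtype]
  rw [key, Finset.card_biUnion hdisj]

end

/-- For every self-map `φ` of a finite set, the sequence of numbers of fixed points of the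
iterates of `φ` satisfies Dold's congruences: for every `n ≥ 1`,
`∑_{k ∣ n} μ(n/k)·#Fix(φᵏ) ≡ 0 (mod n)`, where `μ` is the Möbius function. -/
theorem fixedPoints_iterate_dold_congruences {J : Type*} [Finite J] (φ : J → J) :
    ∀ n : ℕ, 1 ≤ n →
      (n : ℤ) ∣ ∑ k ∈ n.divisors,
        ArithmeticFunction.moebius (n / k) * (Nat.card {x : J // φ^[k] x = x} : ℤ) := by
  intro n hn
  haveI : NeZero n := ⟨by omega⟩
  have hinv : ∑ k ∈ n.divisors,
      (ArithmeticFunction.moebius (n / k) : ℤ) * (Nat.card {x : J // φ^[k] x = x} : ℤ)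
      = (Nat.card {x : J // Function.minimalPeriod φ x = n} : ℤ) := by
    have h1 := (ArithmeticFunction.sum_eq_iff_sum_smul_moebius_eq (R := ℤ)
      (f := fun d => (Nat.card {x : J // Function.minimalPeriod φ x = d} : ℤ))
      (g := fun m => (Nat.card {x : J // φ^[m] x = x} : ℤ))).mp
      (fun m hm => by exact_mod_cast (dold_card_fix φ (show m ≠ 0 by omega)).symm) n (by omega)
    rw [Nat.sum_divisorsAntidiagonal'
      (f := fun a b => (ArithmeticFunction.moebius a : ℤ) •
        (Nat.card {x : J // φ^[b] x = x} : ℤ))] at h1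
    simp only [zsmul_eq_mul] at h1
    exact h1
  rw [hinv]
  exact_mod_cast dold_dvd_card φ n
end

section
/- If φ : J → J and ψ : J' → J' are shift equivalent maps of finite sets, then #Fix(φ^n) = #Fix(ψ^n) for every integer n ≥ 1. -/
private lemma card_fix_le_aux {J J' : Type*} [Finite J'] {φ : J → J} {ψ : J' → J'}
    {a : J → J'} {b : J' → J} {m : ℕ} (ha : a ∘ φ = ψ ∘ a) (hba : b ∘ a = φ^[m])
    (n : ℕ) (hn : 1 ≤ n) :
    Nat.card {x : J // φ^[n] x = x} ≤ Nat.card {x : J' // ψ^[n] x = x} := by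
  have hsc : Function.Semiconj a φ ψ := fun x => congrFun ha x
  have hscn : Function.Semiconj a (φ^[n]) (ψ^[n]) := hsc.iterate_right n
  apply Nat.card_le_card_of_injective (fun p => ⟨a p.1, by rw [← hscn p.1, p.2]⟩)
  rintro ⟨x, hx⟩ ⟨y, hy⟩ hxy
  simp only [Subtype.mk.injEq] at hxy ⊢
  have hm : φ^[m] x = φ^[m] y := by
    rw [← congrFun hba x, ← congrFun hba y, Function.comp_apply, Function.comp_apply, hxy]
  -- x = φ^[n*m - m] (φ^[m] x) since φ^[n*m] x = x and n*m ≥ m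
  have key : ∀ z : J, φ^[n] z = z → φ^[n * m - m + m] z = z := by
    intro z hz
    have h1 : n * m - m + m = n * m := Nat.sub_add_cancel (Nat.le_mul_of_pos_left m hn)
    rw [h1, Function.iterate_mul]
    exact Function.iterate_fixed hz m
  have hx' := key x hx
  have hy' := key y hy
  rw [Function.iterate_add_apply] at hx' hy'
  rw [← hx', ← hy', hm]

/-- Shift equivalent self-maps of finite sets have the same number of fixed points for
every iterate. -/
theorem card_fixedPoints_eq_of_funShiftEquiv {J J' : Type*} [Finite J] [Finite J']
    (φ : J → J) (ψ : J' → J') (h : FunShiftEquiv φ ψ) :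
    ∀ n : ℕ, 1 ≤ n →
      Nat.card {x : J // φ^[n] x = x} = Nat.card {x : J' // ψ^[n] x = x} := by
  obtain ⟨a, b, m, ha, hb, hba, hab⟩ := h
  intro n hn
  exact le_antisymm (card_fix_le_aux ha hba n hn) (card_fix_le_aux hb hab n hn)
end

section
/- Let (H_n)_{n≥0} be a sequence of finite-dimensional ℚ-vector spaces with linear maps p_n : H_{n+1} → H_n, and for m ≥ n let p_{m,n} = p_n ∘ p_{n+1} ∘ … ∘ p_{m−1} : H_m → H_n (with p_{n,n} the identity). If the inverse limit {x ∈ ∏_{n} H_n : p_n(x_{n+1}) = x_n for all n} contains only the zero element, then for every n there exists m ≥ n such that p_{m,n} is the zero map. -/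
/-- The composite map `p_{n+k,n} = p n ∘ p (n+1) ∘ … ∘ p (n+k-1) : H (n+k) → H n` of an
inverse sequence of linear maps (with `p_{n,n}` the identity). -/
def transMap {H : ℕ → Type*} [∀ n, AddCommGroup (H n)] [∀ n, Module ℚ (H n)]
    (p : ∀ n, H (n + 1) →ₗ[ℚ] H n) : ∀ (n k : ℕ), H (n + k) →ₗ[ℚ] H n
  | _, 0 => LinearMap.id
  | n, k + 1 => (transMap p n k).comp (p (n + k))


lemma cast_arg {α : ℕ → Sort*} (f : ∀ a, α a) {a b : ℕ} (h : a = b) (h2 : α a = α b) :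
    cast h2 (f a) = f b := by subst h; rw [cast_eq]

section
variable {H : ℕ → Type*} [∀ n, AddCommGroup (H n)] [∀ n, Module ℚ (H n)]
  (p : ∀ n, H (n + 1) →ₗ[ℚ] H n)

lemma p_cast {a b : ℕ} (h : a = b) (h2 : H (a+1) = H (b+1)) (h3 : H a = H b)
    (x : H (a+1)) : p b (cast h2 x) = cast h3 (p a x) := by
  subst h; rw [cast_eq, cast_eq]

lemma transMap_succ_left (n k : ℕ) (h : H (n+1+k) = H (n+(k+1))) (x : H (n + 1 + k)) :
    transMap p n (k+1) (cast h x) = p n (transMap p (n+1) k x) := by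
  induction k with
  | zero =>
    show p (n+0) (cast h x) = p n (x : H (n+1))
    rw [cast_eq]; rfl
  | succ k ih =>
    show transMap p n (k+1) (p (n+(k+1)) (cast h x)) = p n (transMap p (n+1) k (p (n+1+k) x))
    rw [p_cast p (show n+1+k = n+(k+1) from Nat.succ_add_eq_add_succ n k) h
      (congrArg H (Nat.succ_add_eq_add_succ n k)) x]
    exact ih _ _

lemma transMap_arg_cast {c : ℕ} (m : ℕ) {a b : ℕ} (h : a = b) (h2 : H c = H (m+a))
    (h3 : H c = H (m+b)) (v : H c) :
    transMap p m a (cast h2 v) = transMap p m b (cast h3 v) := by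
  subst h; rfl

lemma range_transMap_succ_left (n k : ℕ) :
    LinearMap.range (transMap p n (k+1)) =
      (LinearMap.range (transMap p (n+1) k)).map (p n) := by
  ext y
  constructor
  · rintro ⟨x, rfl⟩
    refine ⟨transMap p (n+1) k (cast (congrArg H (Nat.succ_add_eq_add_succ n k)).symm x),
      ⟨_, rfl⟩, ?_⟩
    rw [← transMap_succ_left p n k (congrArg H (Nat.succ_add_eq_add_succ n k)) _,
      cast_cast, cast_eq]
  · rintro ⟨-, ⟨x, rfl⟩, rfl⟩
    exact ⟨cast (congrArg H (Nat.succ_add_eq_add_succ n k)) x,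
      transMap_succ_left p n k _ x⟩

lemma range_transMap_antitone (n : ℕ) :
    Antitone fun k => LinearMap.range (transMap p n k) :=
  antitone_nat_of_succ_le fun k y => by
    rintro ⟨x, rfl⟩
    exact ⟨p (n+k) x, rfl⟩

end

/-- If an inverse sequence of finite-dimensional `ℚ`-vector spaces has trivial inverse limit
(the only compatible sequence is zero), then for every `n` some composite map
`p_{m,n} : H m → H n` with `m ≥ n` is zero. -/
theorem exists_transMap_eq_zero_of_limit_trivial {H : ℕ → Type*}
    [∀ n, AddCommGroup (H n)] [∀ n, Module ℚ (H n)] [∀ n, FiniteDimensional ℚ (H n)]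
    (p : ∀ n, H (n + 1) →ₗ[ℚ] H n)
    (hlim : ∀ x : (∀ n, H n), (∀ n, p n (x (n + 1)) = x n) → ∀ n, x n = 0) :
    ∀ n : ℕ, ∃ k : ℕ, transMap p n k = 0 := by

  -- stabilization of the ranges
  have hstab : ∀ n, ∃ k0, ∀ k, k0 ≤ k →
      LinearMap.range (transMap p n k) = LinearMap.range (transMap p n k0) := by
    intro n
    obtain ⟨k0, hk0⟩ : ∃ k0, (Module.finrank ℚ (LinearMap.range (transMap p n k0)) : ℕ) =
        sInf (Set.range fun k => Module.finrank ℚ (LinearMap.range (transMap p n k))) :=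
      Nat.sInf_mem (Set.range_nonempty _)
    refine ⟨k0, fun k hk => ?_⟩
    have hle : LinearMap.range (transMap p n k) ≤ LinearMap.range (transMap p n k0) :=
      range_transMap_antitone p n hk
    refine Submodule.eq_of_le_of_finrank_le hle ?_
    rw [hk0]
    exact Nat.sInf_le ⟨k, rfl⟩
  choose k0 hk0 using hstab
  -- surjectivity of the restricted system of stable ranges
  have hsurj : ∀ n, ∀ v ∈ LinearMap.range (transMap p n (k0 n)),
      ∃ w, w ∈ LinearMap.range (transMap p (n+1) (k0 (n+1))) ∧ p n w = v := by
    intro n v hv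
    have h1 : v ∈ (LinearMap.range (transMap p (n+1) (max (k0 n) (k0 (n+1))))).map (p n) := by
      rw [← range_transMap_succ_left p n _]
      exact (hk0 n (max (k0 n) (k0 (n+1)) + 1)
        (le_trans (le_max_left _ _) (Nat.le_succ _))).symm ▸ hv
    obtain ⟨w, hw, hpw⟩ := h1
    exact ⟨w, (hk0 (n+1) _ (le_max_right _ _)) ▸ hw, hpw⟩
  choose L hL1 hL2 using hsurj
  -- main claim
  intro n
  refine ⟨k0 n, LinearMap.range_eq_bot.mp ((Submodule.eq_bot_iff _).mpr fun v hv => ?_)⟩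
  -- build the compatible sequence through v
  set u : ∀ k, {w : H (n+k) // w ∈ LinearMap.range (transMap p (n+k) (k0 (n+k)))} := fun k =>
    Nat.rec ⟨v, hv⟩ (fun k ih => ⟨L (n+k) ih.1 ih.2, (hL1 (n+k) ih.1 ih.2)⟩) k with hu_def
  have hu : ∀ k, p (n+k) (u (k+1)).1 = (u k).1 := fun k => hL2 (n+k) (u k).1 (u k).2
  set x : ∀ m, H m := fun m =>
    if h : n ≤ m then cast (congrArg H (Nat.add_sub_cancel' h)) (u (m-n)).1
    else transMap p m (n-m)
      (cast (congrArg H (Nat.add_sub_cancel' (Nat.le_of_not_le h)).symm) v) with hx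
  have hcompat : ∀ m, p m (x (m+1)) = x m := by
    intro m
    by_cases h : n ≤ m
    · obtain ⟨k, rfl⟩ : ∃ k, m = n + k := ⟨m - n, (Nat.add_sub_cancel' h).symm⟩
      have h' : n ≤ n + k + 1 := by omega
      rw [hx]
      simp only [dif_pos h, dif_pos h']
      exact (congrArg (p (n+k))
          (cast_arg (fun j => (u j).1) (show n+k+1-n = k+1 by omega) _)).trans
        ((hu k).trans
          (cast_arg (fun j => (u j).1) (show n+k-n = k by omega) _).symm)
    · have hmn : m + 1 ≤ n := by omega
      obtain ⟨j, rfl⟩ : ∃ j, n = m + 1 + j := ⟨n - (m+1), (Nat.add_sub_cancel' hmn).symm⟩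
      have hxm1 : x (m+1) = transMap p (m+1) j v := by
        rw [hx]
        by_cases h2 : m + 1 + j ≤ m + 1
        · have hj : j = 0 := by omega
          subst hj
          simp only [dif_pos h2]
          exact cast_arg (fun i => (u i).1) (show m+1-(m+1+0) = 0 by omega) _
        · simp only [dif_neg h2]
          exact transMap_arg_cast p (m+1) (show m+1+j-(m+1) = j by omega) _
            (congrArg H (show m+1+j = m+1+j from rfl)) v |>.trans (by rw [cast_eq])
      rw [hxm1, hx]
      simp only [dif_neg h]
      exact ((transMap_arg_cast p m (show m+1+j-m = j+1 by omega) _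
          (congrArg H (Nat.succ_add_eq_add_succ m j)) v).trans
        (transMap_succ_left p m j _ v)).symm
  have h0 := hlim x hcompat n
  rw [hx] at h0
  simp only [dif_pos (le_refl n)] at h0
  exact ((cast_arg (fun i => (u i).1) (show n - n = 0 by omega) _).symm.trans h0)
end

section
/- Let (b_k)_{k≥1} and (c_k)_{k≥1} be sequences of non-negative integers, and define the integer sequence (a_k)_{k≥1} by: a_1 = 2 − b_1 − c_1; a_2 = −1 − b_2 + c_2 + c_1; a_k = −b_k − c_k for odd k > 1; a_k = −b_k + c_k for even k > 2 with k/2 even; a_k = −b_k + c_k + c_{k/2} for even k > 2 with k/2 odd. Then for every integer n ≥ 1: if n is odd, ∑_{k|n} k·a_k = 2 − ∑_{k|n} k·(b_k + c_k), and if n is even, ∑_{k|n} k·a_k = −∑_{k|n} k·(b_k − c_k), where all sums are taken over the positive divisors k of n. -/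
/-- If `(b_k)` and `(c_k)` are sequences of non-negative integers and the integer sequence
`(a_k)` is defined by `a_1 = 2 - b_1 - c_1`, `a_2 = -1 - b_2 + c_2 + c_1`,
`a_k = -b_k - c_k` for odd `k > 1`, `a_k = -b_k + c_k` for even `k > 2` with `k/2` even, and
`a_k = -b_k + c_k + c_{k/2}` for even `k > 2` with `k/2` odd, then for every `n ≥ 1`:
if `n` is odd then `∑_{k ∣ n} k·a_k = 2 - ∑_{k ∣ n} k·(b_k + c_k)`, and if `n` is even then
`∑_{k ∣ n} k·a_k = -∑_{k ∣ n} k·(b_k - c_k)`. -/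
theorem sum_divisors_a_eq (b c : ℕ → ℕ) (a : ℕ → ℤ)
    (h1 : a 1 = 2 - (b 1 : ℤ) - (c 1 : ℤ))
    (h2 : a 2 = -1 - (b 2 : ℤ) + (c 2 : ℤ) + (c 1 : ℤ))
    (hodd : ∀ k : ℕ, Odd k → 1 < k → a k = -(b k : ℤ) - (c k : ℤ))
    (heven : ∀ k : ℕ, Even k → 2 < k → Even (k / 2) → a k = -(b k : ℤ) + (c k : ℤ))
    (heven' : ∀ k : ℕ, Even k → 2 < k → Odd (k / 2) →
      a k = -(b k : ℤ) + (c k : ℤ) + (c (k / 2) : ℤ)) :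
    ∀ n : ℕ, 1 ≤ n →
      (Odd n → ∑ k ∈ n.divisors, (k : ℤ) * a k =
        2 - ∑ k ∈ n.divisors, (k : ℤ) * ((b k : ℤ) + (c k : ℤ))) ∧
      (Even n → ∑ k ∈ n.divisors, (k : ℤ) * a k =
        -∑ k ∈ n.divisors, (k : ℤ) * ((b k : ℤ) - (c k : ℤ))) := by
  intro n hn
  have hn0 : n ≠ 0 := by omega
  set u : ℕ → ℤ := fun k => if k = 1 then 2 - 2 * (c 1 : ℤ)
      else if Odd k then -2 * (k : ℤ) * (c k : ℤ) else 0 with hu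
  constructor
  · -- odd case
    intro hno
    have key : ∀ k ∈ n.divisors, (k : ℤ) * a k =
        (k : ℤ) * (-((b k : ℤ) + (c k : ℤ))) + (if k = 1 then 2 else 0) := by
      intro k hk
      obtain ⟨hkd, -⟩ := Nat.mem_divisors.mp hk
      have hko : Odd k := by
        rcases Nat.even_or_odd k with he | ho
        · exfalso
          obtain ⟨d, rfl⟩ := he
          obtain ⟨e, rfl⟩ := hkd
          exact (Nat.not_even_iff_odd.mpr hno) ⟨d * e, by ring⟩
        · exact ho
      rcases eq_or_lt_of_le (show 1 ≤ k from Nat.pos_of_mem_divisors hk) with h | h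
      · rw [← h, if_pos rfl]; push_cast; rw [h1]; ring
      · rw [hodd k hko h, if_neg (by omega : k ≠ 1)]; ring
    rw [Finset.sum_congr rfl key, Finset.sum_add_distrib]
    have h1mem : (1 : ℕ) ∈ n.divisors := Nat.one_mem_divisors.mpr hn0
    rw [Finset.sum_ite_eq' n.divisors 1 (fun _ => (2:ℤ)), if_pos h1mem]
    have : ∑ x ∈ n.divisors, (x : ℤ) * (-((b x : ℤ) + (c x : ℤ)))
        = -∑ k ∈ n.divisors, (k : ℤ) * ((b k : ℤ) + (c k : ℤ)) := by
      rw [← Finset.sum_neg_distrib]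
      exact Finset.sum_congr rfl fun k _ => by ring
    rw [this]; ring
  · -- even case
    intro hne
    obtain ⟨m, hm⟩ : ∃ m, n = 2 * m := by obtain ⟨d, hd⟩ := hne; exact ⟨d, by omega⟩
    have hm2 : n / 2 = m := by omega
    have hm0 : m ≠ 0 := by omega
    have key : ∀ k ∈ n.divisors, (k : ℤ) * a k =
        (k : ℤ) * ((c k : ℤ) - (b k : ℤ)) + (if Even k then -(u (k / 2)) else u k) := by
      intro k hk
      obtain ⟨hkd, -⟩ := Nat.mem_divisors.mp hk
      have hk1 : 1 ≤ k := Nat.pos_of_mem_divisors hk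
      rcases Nat.even_or_odd k with he | ho
      · -- k even
        obtain ⟨j, rfl⟩ := he
        have hj2 : (j + j) / 2 = j := by omega
        rw [if_pos ⟨j, rfl⟩, hj2]
        have hj1 : 1 ≤ j := by omega
        rcases eq_or_lt_of_le hj1 with h | h
        · -- k = 2
          subst h
          rw [hu]
          norm_num [h2]
          ring
        · have hk2 : 2 < j + j := by omega
          rcases Nat.even_or_odd j with he2 | ho2
          · rw [heven (j + j) ⟨j, rfl⟩ hk2 (by rwa [hj2]), hu]
            have h1ne : j ≠ 1 := by omega
            simp only [if_neg h1ne, if_neg (Nat.not_odd_iff_even.mpr he2)]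
            push_cast
            ring
          · rw [heven' (j + j) ⟨j, rfl⟩ hk2 (by rwa [hj2]), hj2, hu]
            have h1ne : j ≠ 1 := by omega
            simp only [if_neg h1ne, if_pos ho2]
            push_cast
            ring
      · -- k odd
        rw [if_neg (Nat.not_even_iff_odd.mpr ho)]
        rcases eq_or_lt_of_le hk1 with h | h
        · rw [← h, hu]
          simp only [if_pos rfl]
          push_cast
          rw [h1]; ring
        · rw [hodd k ho h, hu]
          simp only [if_neg (by omega : k ≠ 1), if_pos ho]
          ring
    rw [Finset.sum_congr rfl key, Finset.sum_add_distrib]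
    have hveven : n.divisors.filter (fun k => Even k) = m.divisors.image (fun d => 2 * d) := by
      ext k
      simp only [Finset.mem_filter, Nat.mem_divisors, Finset.mem_image]
      constructor
      · rintro ⟨⟨hkd, -⟩, hke⟩
        obtain ⟨d, rfl⟩ := hke
        refine ⟨d, ⟨⟨?_, hm0⟩, by omega⟩⟩
        have h2d : 2 * d ∣ 2 * m := by rw [← hm, (by omega : 2 * d = d + d)]; exact hkd
        exact (mul_dvd_mul_iff_left (by norm_num : (2:ℕ) ≠ 0)).mp h2d
      · rintro ⟨d, ⟨hd, -⟩, rfl⟩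
        exact ⟨⟨by rw [hm]; exact mul_dvd_mul_left 2 hd, hn0⟩, even_two_mul d⟩
    have hvodd : n.divisors.filter (fun k => ¬ Even k) = m.divisors.filter (fun k => ¬ Even k) := by
      ext k
      simp only [Finset.mem_filter, Nat.mem_divisors]
      constructor
      · rintro ⟨⟨hkd, -⟩, hko⟩
        refine ⟨⟨?_, hm0⟩, hko⟩
        have hcop : Nat.Coprime 2 k := (Nat.prime_two.coprime_iff_not_dvd).mpr
          (fun hdvd => hko ((Nat.even_iff).mpr (Nat.eq_zero_of_dvd_of_lt hdvd |> fun _ => by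
            omega)))
        exact (Nat.Coprime.dvd_of_dvd_mul_left hcop.symm (by rw [← hm]; exact hkd))
      · rintro ⟨⟨hkd, -⟩, hko⟩
        exact ⟨⟨hkd.trans ⟨2, by omega⟩, hn0⟩, hko⟩
    have hcorr : ∑ k ∈ n.divisors, (if Even k then -(u (k / 2)) else u k) = 0 := by
      rw [← Finset.sum_filter_add_sum_filter_not n.divisors (fun k => Even k)]
      have e1 : ∑ k ∈ n.divisors.filter (fun k => Even k), (if Even k then -(u (k / 2)) else u k)
          = -∑ d ∈ m.divisors, u d := by
        rw [Finset.sum_congr rfl (fun k hk => if_pos (Finset.mem_filter.mp hk).2), hveven,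
          Finset.sum_image (by intro x _ y _ h; beta_reduce at h; omega), ← Finset.sum_neg_distrib]
        exact Finset.sum_congr rfl fun d hd => by norm_num
      have e2 : ∑ k ∈ n.divisors.filter (fun k => ¬ Even k), (if Even k then -(u (k / 2)) else u k)
          = ∑ k ∈ m.divisors.filter (fun k => ¬ Even k), u k := by
        rw [Finset.sum_congr rfl (fun k hk => if_neg (Finset.mem_filter.mp hk).2), hvodd]
      have e3 : ∑ d ∈ m.divisors, u d = ∑ k ∈ m.divisors.filter (fun k => ¬ Even k), u k := by
        rw [← Finset.sum_filter_add_sum_filter_not m.divisors (fun k => Even k)]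
        have hz : ∑ k ∈ m.divisors.filter (fun k => Even k), u k = 0 := by
          refine Finset.sum_eq_zero fun k hk => ?_
          have hke := (Finset.mem_filter.mp hk).2
          have hne1 : k ≠ 1 := by rintro rfl; exact (by decide : ¬ Even 1) hke
          rw [hu]
          simp only [if_neg hne1, if_neg (Nat.not_odd_iff_even.mpr hke)]
        rw [hz, zero_add]
      rw [e1, e2, e3]; ring
    rw [hcorr, add_zero]
    have : -∑ k ∈ n.divisors, (k : ℤ) * ((b k : ℤ) - (c k : ℤ))
        = ∑ k ∈ n.divisors, (k : ℤ) * ((c k : ℤ) - (b k : ℤ)) := by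
      rw [← Finset.sum_neg_distrib]
      exact Finset.sum_congr rfl fun k _ => by ring
    rw [this]
end
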